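/- In H the following hold: the subspace P_{1,da^5}(H) = {x ∈ H : Δ(x) = x⊗1 + da^5⊗x} equals the k-span of 1 − da^5 and ca^5; the subspace P_{1,a^3}(H) = {x ∈ H : Δ(x) = x⊗1 + a^3⊗x} equals the k-span of 1 − a^3; and the subspace P_{1,da^2}(H) = {x ∈ H : Δ(x) = x⊗1 + da^2⊗x} equals the k-span of 1 − da^2. -/

import Mathlib

/- STATEMENT 3: In H: P_{1,da^5}(H) = span{1 - d a^5, c a^5}, P_{1,a^3}(H) = span{1 - a^3},
P_{1,da^2}(H) = span{1 - d a^2}, where P_{1,g}(H) = {x : Δ x = x ⊗ 1 + g ⊗ x}. -/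

open scoped TensorProduct
namespace Paper24

variable (k : Type) [Field k] (ξ : k)

/-- The generator `a` of the free algebra on four generators. -/
noncomputable def a₀ : FreeAlgebra k (Fin 4) := FreeAlgebra.ι k 0
/-- The generator `b`. -/
noncomputable def b₀ : FreeAlgebra k (Fin 4) := FreeAlgebra.ι k 1
/-- The generator `c`. -/
noncomputable def c₀ : FreeAlgebra k (Fin 4) := FreeAlgebra.ι k 2
/-- The generator `d`. -/
noncomputable def d₀ : FreeAlgebra k (Fin 4) := FreeAlgebra.ι k 3

/-- The defining relations of the Hopf algebra `H`; quotienting the free algebra by the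
relation `r ~ r'` for each constructor is the same as quotienting by the two-sided ideal
generated by the corresponding differences. -/
inductive HRel : FreeAlgebra k (Fin 4) → FreeAlgebra k (Fin 4) → Prop
  | a6 : HRel (a₀ k ^ 6) 1
  | b2 : HRel (b₀ k ^ 2) 0
  | c2 : HRel (c₀ k ^ 2) 0
  | d6 : HRel (d₀ k ^ 6) 1
  | a2d2 : HRel (a₀ k ^ 2) (d₀ k ^ 2)
  | ad : HRel (a₀ k * d₀ k) (d₀ k * a₀ k)
  | bc : HRel (b₀ k * c₀ k) 0
  | cb : HRel (c₀ k * b₀ k) 0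
  | ab : HRel (a₀ k * b₀ k) (ξ • (b₀ k * a₀ k))
  | ac : HRel (a₀ k * c₀ k) (ξ • (c₀ k * a₀ k))
  | db : HRel (d₀ k * b₀ k) (-(ξ • (b₀ k * d₀ k)))
  | dc : HRel (d₀ k * c₀ k) (-(ξ • (c₀ k * d₀ k)))
  | bd : HRel (b₀ k * d₀ k) (c₀ k * a₀ k)
  | ba : HRel (b₀ k * a₀ k) (c₀ k * d₀ k)

/-- The algebra `H`, as a quotient of the free algebra by the defining relations. -/
noncomputable abbrev HAlg := RingQuot (HRel k ξ)

/-- The image of `a` in `H`. -/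
noncomputable def Ha : HAlg k ξ := RingQuot.mkAlgHom k (HRel k ξ) (a₀ k)
/-- The image of `b` in `H`. -/
noncomputable def Hb : HAlg k ξ := RingQuot.mkAlgHom k (HRel k ξ) (b₀ k)
/-- The image of `c` in `H`. -/
noncomputable def Hc : HAlg k ξ := RingQuot.mkAlgHom k (HRel k ξ) (c₀ k)
/-- The image of `d` in `H`. -/
noncomputable def Hd : HAlg k ξ := RingQuot.mkAlgHom k (HRel k ξ) (d₀ k)

end Paper24

open Paper24


namespace Sol
open Paper24

variable {k : Type} [Field k]

abbrev I : Type := Fin 4 × ZMod 6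
abbrev M (k : Type) [Field k] : Type := I → k

/-- generic "monomial" linear map on M -/
def shiftMap (c : I → k) (s : I → I) : M k →ₗ[k] M k where
  toFun f := fun p => c p * f (s p)
  map_add' f g := by funext p; simp [mul_add]
  map_smul' r f := by funext p; simp [Pi.smul_apply, smul_eq_mul]; ring

@[simp] lemma shiftMap_apply (c : I → k) (s : I → I) (f : M k) (p : I) :
    shiftMap c s f p = c p * f (s p) := rfl

def LA (ξ : k) : M k →ₗ[k] M k :=
  shiftMap (fun p => if p.1 = 1 ∨ p.1 = 2 then ξ else 1) (fun p => (p.1, p.2 - 1))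

def LB : M k →ₗ[k] M k :=
  shiftMap (fun p => if p.1 = 1 ∨ p.1 = 2 then 1 else 0)
    (fun p => if p.1 = 1 then (0, p.2) else (3, p.2 - 1))

def LC : M k →ₗ[k] M k :=
  shiftMap (fun p => if p.1 = 1 ∨ p.1 = 2 then 1 else 0)
    (fun p => if p.1 = 2 then (0, p.2) else (3, p.2 - 1))

def LD (ξ : k) : M k →ₗ[k] M k :=
  shiftMap (fun p => if p.1 = 1 ∨ p.1 = 2 then -ξ else 1)
    (fun p => if p.1 = 3 then (0, p.2) else if p.1 = 0 then (3, p.2 - 2)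
      else if p.1 = 1 then (2, p.2 - 1) else (1, p.2 - 1))

variable {ξ : k}

lemma LA6 (h6 : ξ ^ 6 = 1) : (LA ξ : Module.End k (M k)) ^ 6 = 1 := by
  apply LinearMap.ext; intro f; funext p
  obtain ⟨t, i⟩ := p
  fin_cases t <;>
    simp [pow_succ, Module.End.mul_apply, LA, sub_sub, show (1+1+1+1+1+1 : ZMod 6) = 0 by decide] <;>
    · rw [show ξ*(ξ*(ξ*(ξ*(ξ*(ξ * f _))))) = ξ^6 * f _ by ring, h6, one_mul]

lemma LD6 (h6 : ξ ^ 6 = 1) : (LD ξ : Module.End k (M k)) ^ 6 = 1 := by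
  refine LinearMap.ext fun f => funext fun p => ?_
  obtain ⟨t, i⟩ := p
  fin_cases t <;>
    simp [pow_succ, Module.End.mul_apply, LD, sub_sub] <;> ring_nf <;>
    simp [show ((-6 : ZMod 6)) = 0 by decide, h6]


variable (ξ) in
noncomputable def rep : FreeAlgebra k (Fin 4) →ₐ[k] Module.End k (M k) :=
  FreeAlgebra.lift k ![LA ξ, LB, LC, LD ξ]

@[simp] lemma rep_a : rep ξ (a₀ k) = LA ξ := by simp [rep, a₀]
@[simp] lemma rep_b : rep ξ (b₀ k) = LB := by simp [rep, b₀]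
@[simp] lemma rep_c : rep ξ (c₀ k) = LC := by simp [rep, c₀]
@[simp] lemma rep_d : rep ξ (d₀ k) = LD ξ := by simp [rep, d₀]

lemma rep_holds (h6 : ξ ^ 6 = 1) : ∀ ⦃x y⦄, HRel k ξ x y → rep ξ x = rep ξ y := by
  intro x y r
  induction r with
  | a6 => rw [map_pow, map_one, rep_a]; exact LA6 h6
  | d6 => rw [map_pow, map_one, rep_d]; exact LD6 h6
  | _ =>
    simp only [map_mul, map_pow, map_smul, map_one, map_zero, map_neg, rep_a, rep_b, rep_c, rep_d]
    refine LinearMap.ext fun f => funext fun p => ?_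
    obtain ⟨t, i⟩ := p
    fin_cases t <;>
      simp [pow_succ, Module.End.mul_apply, LA, LB, LC, LD, sub_sub] <;> ring_nf <;>
      simp [show ((-6 : ZMod 6)) = 0 by decide, h6]


variable (k ξ) in
noncomputable def piH (h6 : ξ ^ 6 = 1) : HAlg k ξ →ₐ[k] Module.End k (M k) :=
  RingQuot.liftAlgHom k ⟨rep ξ, rep_holds h6⟩

lemma piH_mk (h6 : ξ ^ 6 = 1) (x : FreeAlgebra k (Fin 4)) :
    piH k ξ h6 (RingQuot.mkAlgHom k (HRel k ξ) x) = rep ξ x :=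
  RingQuot.liftAlgHom_mkAlgHom_apply k (rep ξ) (rep_holds h6) x

variable (k) in
def e0 : M k := Pi.single ((0 : Fin 4), (0 : ZMod 6)) 1

lemma LA_single0 (j : ZMod 6) (v : k) :
    LA ξ (Pi.single ((0 : Fin 4), j) v) = Pi.single ((0 : Fin 4), j + 1) v := by
  funext p; obtain ⟨t, i⟩ := p
  fin_cases t <;>
    simp [LA, Pi.single_apply, Prod.ext_iff, sub_eq_iff_eq_add]

lemma LB_single0 (j : ZMod 6) (v : k) :
    LB (Pi.single ((0 : Fin 4), j) v) = Pi.single ((1 : Fin 4), j) v := by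
  funext p; obtain ⟨t, i⟩ := p
  fin_cases t <;>
    simp [LB, Pi.single_apply, Prod.ext_iff, sub_eq_iff_eq_add]

lemma LC_single0 (j : ZMod 6) (v : k) :
    LC (Pi.single ((0 : Fin 4), j) v) = Pi.single ((2 : Fin 4), j) v := by
  funext p; obtain ⟨t, i⟩ := p
  fin_cases t <;>
    simp [LC, Pi.single_apply, Prod.ext_iff, sub_eq_iff_eq_add]

lemma LD_single0 (j : ZMod 6) (v : k) :
    LD ξ (Pi.single ((0 : Fin 4), j) v) = Pi.single ((3 : Fin 4), j) v := by
  funext p; obtain ⟨t, i⟩ := p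
  fin_cases t <;>
    simp [LD, Pi.single_apply, Prod.ext_iff, sub_eq_iff_eq_add]

lemma LA_pow_e0 : ∀ n : ℕ, ((LA ξ) ^ n) (e0 k) =
    Pi.single ((0 : Fin 4), (n : ZMod 6)) (1 : k)
  | 0 => by simp [e0]
  | (n+1) => by
      rw [pow_succ', Module.End.mul_apply, LA_pow_e0 n, LA_single0]
      push_cast; ring_nf

variable (k ξ) in
noncomputable def φm (h6 : ξ ^ 6 = 1) : HAlg k ξ →ₗ[k] M k :=
  (LinearMap.applyₗ (e0 k)).comp (piH k ξ h6).toLinearMap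

lemma φm_apply (h6 : ξ ^ 6 = 1) (x : HAlg k ξ) : φm k ξ h6 x = piH k ξ h6 x (e0 k) := rfl

variable (k ξ) in
noncomputable def pa (i : ZMod 6) : HAlg k ξ := Ha k ξ ^ i.val

variable (k ξ) in
noncomputable def w : I → HAlg k ξ := fun p =>
  (![1, Hb k ξ, Hc k ξ, Hd k ξ] p.1) * pa k ξ p.2

@[simp] lemma w0 (i : ZMod 6) : w k ξ ((0 : Fin 4), i) = pa k ξ i := by simp [w]
@[simp] lemma w1 (i : ZMod 6) : w k ξ ((1 : Fin 4), i) = Hb k ξ * pa k ξ i := rfl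
@[simp] lemma w2 (i : ZMod 6) : w k ξ ((2 : Fin 4), i) = Hc k ξ * pa k ξ i := rfl
@[simp] lemma w3 (i : ZMod 6) : w k ξ ((3 : Fin 4), i) = Hd k ξ * pa k ξ i := rfl

lemma φm_w (h6 : ξ ^ 6 = 1) (p : I) : φm k ξ h6 (w k ξ p) = Pi.single p (1 : k) := by
  obtain ⟨t, i⟩ := p
  have hpa : piH k ξ h6 (pa k ξ i) = (LA ξ) ^ i.val := by
    rw [pa, map_pow]
    congr 1
    rw [Ha, piH_mk, rep_a]
  have he : piH k ξ h6 (pa k ξ i) (e0 k) = Pi.single ((0 : Fin 4), i) (1 : k) := by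
    rw [hpa, LA_pow_e0, ZMod.natCast_val, ZMod.cast_id]
  obtain rfl | rfl | rfl | rfl : t = 0 ∨ t = 1 ∨ t = 2 ∨ t = 3 := by revert t; decide
  · rw [φm_apply, w0, he]
  · rw [φm_apply, w1, map_mul, Module.End.mul_apply, he, Hb, piH_mk, rep_b, LB_single0]
  · rw [φm_apply, w2, map_mul, Module.End.mul_apply, he, Hc, piH_mk, rep_c, LC_single0]
  · rw [φm_apply, w3, map_mul, Module.End.mul_apply, he, Hd, piH_mk, rep_d, LD_single0]

lemma w_li (h6 : ξ ^ 6 = 1) : LinearIndependent k (w k ξ) := by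
  have : LinearIndependent k (fun p : I => Pi.single p (1 : k)) := by
    have h := (Pi.basisFun k I).linearIndependent
    have e : ⇑(Pi.basisFun k I) = fun p : I => Pi.single p (1 : k) :=
      funext fun p => Pi.basisFun_apply k I p
    rwa [e] at h
  refine LinearIndependent.of_comp (φm k ξ h6) ?_
  simpa [Function.comp_def, φm_w h6] using this


lemma rA6 : Ha k ξ ^ 6 = 1 := by
  have := RingQuot.mkAlgHom_rel k (HRel.a6 (k := k) (ξ := ξ))
  simpa [Ha, map_pow] using this

lemma rB2 : Hb k ξ * Hb k ξ = 0 := by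
  have := RingQuot.mkAlgHom_rel k (HRel.b2 (k := k) (ξ := ξ))
  simpa [Hb, map_pow, pow_two] using this

lemma rC2 : Hc k ξ * Hc k ξ = 0 := by
  have := RingQuot.mkAlgHom_rel k (HRel.c2 (k := k) (ξ := ξ))
  simpa [Hc, map_pow, pow_two] using this

lemma rDD : Hd k ξ * Hd k ξ = Ha k ξ * Ha k ξ := by
  have := RingQuot.mkAlgHom_rel k (HRel.a2d2 (k := k) (ξ := ξ))
  simpa [Ha, Hd, map_pow, pow_two] using this.symm

lemma rAD : Ha k ξ * Hd k ξ = Hd k ξ * Ha k ξ := by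
  have := RingQuot.mkAlgHom_rel k (HRel.ad (k := k) (ξ := ξ))
  simpa [Ha, Hd] using this

lemma rBC : Hb k ξ * Hc k ξ = 0 := by
  have := RingQuot.mkAlgHom_rel k (HRel.bc (k := k) (ξ := ξ))
  simpa [Hb, Hc] using this

lemma rCB : Hc k ξ * Hb k ξ = 0 := by
  have := RingQuot.mkAlgHom_rel k (HRel.cb (k := k) (ξ := ξ))
  simpa [Hb, Hc] using this

lemma rAB : Ha k ξ * Hb k ξ = ξ • (Hb k ξ * Ha k ξ) := by
  have := RingQuot.mkAlgHom_rel k (HRel.ab (k := k) (ξ := ξ))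
  simpa [Ha, Hb] using this

lemma rAC : Ha k ξ * Hc k ξ = ξ • (Hc k ξ * Ha k ξ) := by
  have := RingQuot.mkAlgHom_rel k (HRel.ac (k := k) (ξ := ξ))
  simpa [Ha, Hc] using this

lemma rDB : Hd k ξ * Hb k ξ = -(ξ • (Hb k ξ * Hd k ξ)) := by
  have := RingQuot.mkAlgHom_rel k (HRel.db (k := k) (ξ := ξ))
  simpa [Hd, Hb] using this

lemma rDC : Hd k ξ * Hc k ξ = -(ξ • (Hc k ξ * Hd k ξ)) := by
  have := RingQuot.mkAlgHom_rel k (HRel.dc (k := k) (ξ := ξ))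
  simpa [Hd, Hc] using this

lemma rBD : Hb k ξ * Hd k ξ = Hc k ξ * Ha k ξ := by
  have := RingQuot.mkAlgHom_rel k (HRel.bd (k := k) (ξ := ξ))
  simpa [Ha, Hb, Hc, Hd] using this

lemma rBA : Hb k ξ * Ha k ξ = Hc k ξ * Hd k ξ := by
  have := RingQuot.mkAlgHom_rel k (HRel.ba (k := k) (ξ := ξ))
  simpa [Ha, Hb, Hc, Hd] using this

lemma haPow (n : ℕ) : Ha k ξ ^ (n % 6) = Ha k ξ ^ n := by
  conv_rhs => rw [← Nat.div_add_mod n 6, pow_add, pow_mul, rA6, one_pow, one_mul]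

@[simp] lemma pa_zero : pa k ξ 0 = 1 := by simp [pa, ZMod.val_zero]

lemma pa_succ (i : ZMod 6) : Ha k ξ * pa k ξ i = pa k ξ (i + 1) := by
  have hv : (i + 1).val = (i.val + 1) % 6 := by
    rw [ZMod.val_add]; norm_num [show ZMod.val (1 : ZMod 6) = 1 from rfl]
  rw [pa, pa, hv, haPow, pow_succ']

lemma pa_nat (n : ℕ) : Ha k ξ ^ n = pa k ξ (n : ZMod 6) := by
  rw [pa, ← haPow, ZMod.val_natCast]

lemma AW0 (i : ZMod 6) : Ha k ξ * w k ξ (0, i) = w k ξ (0, i + 1) := by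
  rw [w0, w0, pa_succ]

lemma AW1 (i : ZMod 6) : Ha k ξ * w k ξ (1, i) = ξ • w k ξ (1, i + 1) := by
  rw [w1, w1, ← mul_assoc, rAB, smul_mul_assoc, mul_assoc, pa_succ]

lemma AW2 (i : ZMod 6) : Ha k ξ * w k ξ (2, i) = ξ • w k ξ (2, i + 1) := by
  rw [w2, w2, ← mul_assoc, rAC, smul_mul_assoc, mul_assoc, pa_succ]

lemma AW3 (i : ZMod 6) : Ha k ξ * w k ξ (3, i) = w k ξ (3, i + 1) := by
  rw [w3, w3, ← mul_assoc, rAD, mul_assoc, pa_succ]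

lemma BW0 (i : ZMod 6) : Hb k ξ * w k ξ (0, i) = w k ξ (1, i) := by
  rw [w0, w1]

lemma BW1 (i : ZMod 6) : Hb k ξ * w k ξ (1, i) = 0 := by
  rw [w1, ← mul_assoc, rB2, zero_mul]

lemma BW2 (i : ZMod 6) : Hb k ξ * w k ξ (2, i) = 0 := by
  rw [w2, ← mul_assoc, rBC, zero_mul]

lemma BW3 (i : ZMod 6) : Hb k ξ * w k ξ (3, i) = w k ξ (2, i + 1) := by
  rw [w3, w2, ← mul_assoc, rBD, mul_assoc, pa_succ]

lemma CW0 (i : ZMod 6) : Hc k ξ * w k ξ (0, i) = w k ξ (2, i) := by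
  rw [w0, w2]

lemma CW1 (i : ZMod 6) : Hc k ξ * w k ξ (1, i) = 0 := by
  rw [w1, ← mul_assoc, rCB, zero_mul]

lemma CW2 (i : ZMod 6) : Hc k ξ * w k ξ (2, i) = 0 := by
  rw [w2, ← mul_assoc, rC2, zero_mul]

lemma CW3 (i : ZMod 6) : Hc k ξ * w k ξ (3, i) = w k ξ (1, i + 1) := by
  rw [w3, w1, ← mul_assoc, ← rBA, mul_assoc, pa_succ]

lemma DW0 (i : ZMod 6) : Hd k ξ * w k ξ (0, i) = w k ξ (3, i) := by
  rw [w0, w3]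

lemma DW1 (i : ZMod 6) : Hd k ξ * w k ξ (1, i) = -(ξ • w k ξ (2, i + 1)) := by
  rw [w1, w2, ← mul_assoc, rDB, rBD]
  have h : (ξ • (Hc k ξ * Ha k ξ)) * pa k ξ i = ξ • (Hc k ξ * pa k ξ (i + 1)) := by
    rw [smul_mul_assoc, mul_assoc, pa_succ]
  rw [← h]
  exact neg_mul (ξ • (Hc k ξ * Ha k ξ)) (pa k ξ i)

lemma DW2 (i : ZMod 6) : Hd k ξ * w k ξ (2, i) = -(ξ • w k ξ (1, i + 1)) := by
  rw [w2, w1, ← mul_assoc, rDC, ← rBA]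
  have h : (ξ • (Hb k ξ * Ha k ξ)) * pa k ξ i = ξ • (Hb k ξ * pa k ξ (i + 1)) := by
    rw [smul_mul_assoc, mul_assoc, pa_succ]
  rw [← h]
  exact neg_mul (ξ • (Hb k ξ * Ha k ξ)) (pa k ξ i)

lemma DW3 (i : ZMod 6) : Hd k ξ * w k ξ (3, i) = w k ξ (0, i + 2) := by
  rw [w3, w0, ← mul_assoc, rDD, mul_assoc, pa_succ, pa_succ]
  norm_num [add_assoc, one_add_one_eq_two]

lemma one_eq_w : (1 : HAlg k ξ) = w k ξ (0, 0) := by rw [w0, pa_zero]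

lemma span_w : Submodule.span k (Set.range (w k ξ)) = ⊤ := by
  set SP := Submodule.span k (Set.range (w k ξ)) with hSP
  have hw : ∀ p, w k ξ p ∈ SP := fun p => Submodule.subset_span ⟨p, rfl⟩
  have h1 : (1 : HAlg k ξ) ∈ SP := by rw [one_eq_w]; exact hw _
  have hgen : ∀ (n : Fin 4) (z : HAlg k ξ), z ∈ SP →
      RingQuot.mkAlgHom k (HRel k ξ) (FreeAlgebra.ι k n) * z ∈ SP := by
    intro n z hz
    induction hz using Submodule.span_induction with
    | mem u hu =>
      obtain ⟨p, rfl⟩ := hu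
      obtain ⟨t, i⟩ := p
      have ht4 : ∀ t : Fin 4, t = 0 ∨ t = 1 ∨ t = 2 ∨ t = 3 := by decide
      obtain rfl | rfl | rfl | rfl := ht4 n <;> obtain rfl | rfl | rfl | rfl := ht4 t
      · rw [show RingQuot.mkAlgHom k (HRel k ξ) (FreeAlgebra.ι k 0) = Ha k ξ from rfl, AW0]
        exact hw _
      · rw [show RingQuot.mkAlgHom k (HRel k ξ) (FreeAlgebra.ι k 0) = Ha k ξ from rfl, AW1]
        exact Submodule.smul_mem _ _ (hw _)
      · rw [show RingQuot.mkAlgHom k (HRel k ξ) (FreeAlgebra.ι k 0) = Ha k ξ from rfl, AW2]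
        exact Submodule.smul_mem _ _ (hw _)
      · rw [show RingQuot.mkAlgHom k (HRel k ξ) (FreeAlgebra.ι k 0) = Ha k ξ from rfl, AW3]
        exact hw _
      · rw [show RingQuot.mkAlgHom k (HRel k ξ) (FreeAlgebra.ι k 1) = Hb k ξ from rfl, BW0]
        exact hw _
      · rw [show RingQuot.mkAlgHom k (HRel k ξ) (FreeAlgebra.ι k 1) = Hb k ξ from rfl, BW1]
        exact Submodule.zero_mem _
      · rw [show RingQuot.mkAlgHom k (HRel k ξ) (FreeAlgebra.ι k 1) = Hb k ξ from rfl, BW2]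
        exact Submodule.zero_mem _
      · rw [show RingQuot.mkAlgHom k (HRel k ξ) (FreeAlgebra.ι k 1) = Hb k ξ from rfl, BW3]
        exact hw _
      · rw [show RingQuot.mkAlgHom k (HRel k ξ) (FreeAlgebra.ι k 2) = Hc k ξ from rfl, CW0]
        exact hw _
      · rw [show RingQuot.mkAlgHom k (HRel k ξ) (FreeAlgebra.ι k 2) = Hc k ξ from rfl, CW1]
        exact Submodule.zero_mem _
      · rw [show RingQuot.mkAlgHom k (HRel k ξ) (FreeAlgebra.ι k 2) = Hc k ξ from rfl, CW2]
        exact Submodule.zero_mem _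
      · rw [show RingQuot.mkAlgHom k (HRel k ξ) (FreeAlgebra.ι k 2) = Hc k ξ from rfl, CW3]
        exact hw _
      · rw [show RingQuot.mkAlgHom k (HRel k ξ) (FreeAlgebra.ι k 3) = Hd k ξ from rfl, DW0]
        exact hw _
      · rw [show RingQuot.mkAlgHom k (HRel k ξ) (FreeAlgebra.ι k 3) = Hd k ξ from rfl, DW1]
        exact Submodule.neg_mem _ (Submodule.smul_mem _ _ (hw _))
      · rw [show RingQuot.mkAlgHom k (HRel k ξ) (FreeAlgebra.ι k 3) = Hd k ξ from rfl, DW2]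
        exact Submodule.neg_mem _ (Submodule.smul_mem _ _ (hw _))
      · rw [show RingQuot.mkAlgHom k (HRel k ξ) (FreeAlgebra.ι k 3) = Hd k ξ from rfl, DW3]
        exact hw _
    | zero => rw [mul_zero]; exact Submodule.zero_mem _
    | add u v _ _ hu hv => rw [mul_add]; exact Submodule.add_mem _ hu hv
    | smul r u _ hu => rw [mul_smul_comm]; exact Submodule.smul_mem _ _ hu
  rw [eq_top_iff]
  rintro x -
  obtain ⟨y, rfl⟩ := RingQuot.mkAlgHom_surjective k (HRel k ξ) x
  have key : ∀ z ∈ SP, RingQuot.mkAlgHom k (HRel k ξ) y * z ∈ SP := by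
    induction y using FreeAlgebra.induction with
    | grade0 r =>
      intro z hz
      rw [AlgHom.commutes]
      rw [Algebra.algebraMap_eq_smul_one, smul_mul_assoc, one_mul]
      exact Submodule.smul_mem _ _ hz
    | grade1 n => exact fun z hz => hgen n z hz
    | mul u v hu hv =>
      intro z hz
      rw [map_mul, mul_assoc]
      exact hu _ (hv z hz)
    | add u v hu hv =>
      intro z hz
      rw [map_add, add_mul]
      exact Submodule.add_mem _ (hu z hz) (hv z hz)
  simpa using key 1 h1

variable (k ξ) in
noncomputable def bas (h6 : ξ ^ 6 = 1) : Module.Basis I k (HAlg k ξ) :=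
  Module.Basis.mk (w_li h6) (by rw [span_w])

@[simp] lemma bas_apply (h6 : ξ ^ 6 = 1) (p : I) : bas k ξ h6 p = w k ξ p :=
  Module.Basis.mk_apply _ _ _


/-- the scalar sequence `S_n = 1 + ξ^2 + ... + ξ^(2(n-1))` -/
def Sc (ξ : k) : ℕ → k
  | 0 => 0
  | (n+1) => 1 + ξ ^ 2 * Sc ξ n

lemma rDB' : Hd k ξ * Hb k ξ = (-ξ) • (Hb k ξ * Hd k ξ) := by
  rw [rDB]; exact (neg_smul ξ (Hb k ξ * Hd k ξ)).symm

lemma rDC' : Hd k ξ * Hc k ξ = (-ξ) • (Hc k ξ * Hd k ξ) := by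
  rw [rDC]; exact (neg_smul ξ (Hc k ξ * Hd k ξ)).symm

lemma auxAB (n : ℕ) : Ha k ξ * (Hb k ξ * Ha k ξ ^ n) = ξ • (Hb k ξ * Ha k ξ ^ (n+1)) := by
  rw [← mul_assoc, rAB, smul_mul_assoc, mul_assoc, ← pow_succ']

lemma auxAC (n : ℕ) : Ha k ξ * (Hc k ξ * Ha k ξ ^ n) = ξ • (Hc k ξ * Ha k ξ ^ (n+1)) := by
  rw [← mul_assoc, rAC, smul_mul_assoc, mul_assoc, ← pow_succ']

lemma auxBB (n : ℕ) : Hb k ξ * (Hb k ξ * Ha k ξ ^ n) = 0 := by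
  rw [← mul_assoc, rB2, zero_mul]

lemma auxBC (n : ℕ) : Hb k ξ * (Hc k ξ * Ha k ξ ^ n) = 0 := by
  rw [← mul_assoc, rBC, zero_mul]

lemma auxCB (n : ℕ) : Hc k ξ * (Hb k ξ * Ha k ξ ^ n) = 0 := by
  rw [← mul_assoc, rCB, zero_mul]

lemma auxCC (n : ℕ) : Hc k ξ * (Hc k ξ * Ha k ξ ^ n) = 0 := by
  rw [← mul_assoc, rC2, zero_mul]

lemma auxDB (n : ℕ) : Hd k ξ * (Hb k ξ * Ha k ξ ^ n) = (-ξ) • (Hc k ξ * Ha k ξ ^ (n+1)) := by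
  rw [← mul_assoc, rDB', rBD, smul_mul_assoc, mul_assoc, ← pow_succ']

lemma auxDC (n : ℕ) : Hd k ξ * (Hc k ξ * Ha k ξ ^ n) = (-ξ) • (Hb k ξ * Ha k ξ ^ (n+1)) := by
  rw [← mul_assoc, rDC', ← rBA, smul_mul_assoc, mul_assoc, ← pow_succ']

section Delta

variable (Δ : HAlg k ξ →ₐ[k] (HAlg k ξ ⊗[k] HAlg k ξ))
variable (hΔa : Δ (Ha k ξ) = Ha k ξ ⊗ₜ[k] Ha k ξ + Hb k ξ ⊗ₜ[k] Hc k ξ)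
variable (hΔb : Δ (Hb k ξ) = Ha k ξ ⊗ₜ[k] Hb k ξ + Hb k ξ ⊗ₜ[k] Hd k ξ)
variable (hΔc : Δ (Hc k ξ) = Hc k ξ ⊗ₜ[k] Ha k ξ + Hd k ξ ⊗ₜ[k] Hc k ξ)
variable (hΔd : Δ (Hd k ξ) = Hd k ξ ⊗ₜ[k] Hd k ξ + Hc k ξ ⊗ₜ[k] Hb k ξ)

include hΔa in
lemma ΔA (n : ℕ) : Δ (Ha k ξ ^ n) = (Ha k ξ ^ n) ⊗ₜ[k] (Ha k ξ ^ n) +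
    Sc ξ n • ((Hb k ξ * Ha k ξ ^ (n-1)) ⊗ₜ[k] (Hc k ξ * Ha k ξ ^ (n-1))) := by
  induction n with
  | zero => simp [Sc, Algebra.TensorProduct.one_def]
  | succ n ih =>
    match n, ih with
    | 0, _ =>
      rw [pow_one, hΔa]
      norm_num [Sc]
    | (m+1), ih =>
      rw [pow_succ' (Ha k ξ) (m+1), map_mul, hΔa, ih]
      simp only [mul_add, add_mul, Algebra.TensorProduct.tmul_mul_tmul, mul_smul_comm,
        Nat.add_sub_cancel, auxAB, auxAC, auxBB, auxBC, ← pow_succ',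
        ← TensorProduct.smul_tmul', TensorProduct.tmul_smul, smul_smul,
        TensorProduct.zero_tmul, smul_zero, add_zero]
      rw [show Sc ξ (m+1+1) = 1 + ξ^2 * Sc ξ (m+1) from rfl]
      module

include hΔa hΔb in
lemma ΔB (n : ℕ) : Δ (Hb k ξ * Ha k ξ ^ n) = (Ha k ξ ^ (n+1)) ⊗ₜ[k] (Hb k ξ * Ha k ξ ^ n) +
    (Hb k ξ * Ha k ξ ^ n) ⊗ₜ[k] (Hd k ξ * Ha k ξ ^ n) := by
  rw [map_mul, hΔb, ΔA Δ hΔa n]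
  simp only [mul_add, add_mul, Algebra.TensorProduct.tmul_mul_tmul, mul_smul_comm,
    auxBB, auxBC, ← pow_succ', ← TensorProduct.smul_tmul', TensorProduct.tmul_smul, smul_smul,
    TensorProduct.zero_tmul, TensorProduct.tmul_zero, smul_zero, add_zero, zero_add]

include hΔa hΔc in
lemma ΔC (n : ℕ) : Δ (Hc k ξ * Ha k ξ ^ n) = (Hc k ξ * Ha k ξ ^ n) ⊗ₜ[k] (Ha k ξ ^ (n+1)) +
    (Hd k ξ * Ha k ξ ^ n) ⊗ₜ[k] (Hc k ξ * Ha k ξ ^ n) := by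
  rw [map_mul, hΔc, ΔA Δ hΔa n]
  simp only [mul_add, add_mul, Algebra.TensorProduct.tmul_mul_tmul, mul_smul_comm,
    auxCB, auxCC, ← pow_succ', ← TensorProduct.smul_tmul', TensorProduct.tmul_smul, smul_smul,
    TensorProduct.zero_tmul, TensorProduct.tmul_zero, smul_zero, add_zero, zero_add]

include hΔa hΔd in
lemma ΔD (n : ℕ) : Δ (Hd k ξ * Ha k ξ ^ n) = (Hd k ξ * Ha k ξ ^ n) ⊗ₜ[k] (Hd k ξ * Ha k ξ ^ n) +
    (1 + Sc ξ n * ξ ^ 2) • ((Hc k ξ * Ha k ξ ^ n) ⊗ₜ[k] (Hb k ξ * Ha k ξ ^ n)) := by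
  match n with
  | 0 =>
    rw [pow_zero, mul_one, hΔd]
    norm_num [Sc]
  | (m+1) =>
    rw [map_mul, hΔd, ΔA Δ hΔa (m+1)]
    simp only [mul_add, add_mul, Algebra.TensorProduct.tmul_mul_tmul, mul_smul_comm,
      Nat.add_sub_cancel, auxDB, auxDC, auxCB, ← pow_succ',
      ← TensorProduct.smul_tmul', TensorProduct.tmul_smul, smul_smul,
      TensorProduct.zero_tmul, TensorProduct.tmul_zero, smul_zero, add_zero, zero_add]
    module

end Delta

variable (ξ) in
/-- `S` indexed by `ZMod 6` -/
def Sz (i : ZMod 6) : k := Sc ξ i.val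

variable (ξ) in
/-- `T` indexed by `ZMod 6` -/
def Tz (i : ZMod 6) : k := 1 + Sc ξ i.val * ξ ^ 2

lemma pa_def (i : ZMod 6) : pa k ξ i = Ha k ξ ^ i.val := rfl

lemma cast_val_succ (i : ZMod 6) : ((i.val + 1 : ℕ) : ZMod 6) = i + 1 := by
  push_cast
  rw [ZMod.natCast_val, ZMod.cast_id]

lemma pa_val_succ (i : ZMod 6) : Ha k ξ ^ (i.val + 1) = pa k ξ (i + 1) := by
  rw [pa_nat, cast_val_succ]

section Delta2

variable (Δ : HAlg k ξ →ₐ[k] (HAlg k ξ ⊗[k] HAlg k ξ))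
variable (hΔa : Δ (Ha k ξ) = Ha k ξ ⊗ₜ[k] Ha k ξ + Hb k ξ ⊗ₜ[k] Hc k ξ)
variable (hΔb : Δ (Hb k ξ) = Ha k ξ ⊗ₜ[k] Hb k ξ + Hb k ξ ⊗ₜ[k] Hd k ξ)
variable (hΔc : Δ (Hc k ξ) = Hc k ξ ⊗ₜ[k] Ha k ξ + Hd k ξ ⊗ₜ[k] Hc k ξ)
variable (hΔd : Δ (Hd k ξ) = Hd k ξ ⊗ₜ[k] Hd k ξ + Hc k ξ ⊗ₜ[k] Hb k ξ)

include hΔa in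
lemma Δw0 (i : ZMod 6) : Δ (w k ξ (0, i)) = w k ξ (0, i) ⊗ₜ[k] w k ξ (0, i) +
    Sz ξ i • (w k ξ (1, i - 1) ⊗ₜ[k] w k ξ (2, i - 1)) := by
  rw [w0, w1, w2, pa_def]
  rw [ΔA Δ hΔa i.val]
  by_cases h : i = 0
  · subst h
    rw [show Sz ξ (0 : ZMod 6) = 0 from rfl, show Sc ξ (ZMod.val (0 : ZMod 6)) = 0 from rfl]
    rw [zero_smul, zero_smul]
  · have hv : (i - 1).val = i.val - 1 := by revert h; revert i; decide
    rw [Sz, pa_def (i - 1), hv]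

include hΔa hΔb in
lemma Δw1 (i : ZMod 6) : Δ (w k ξ (1, i)) = w k ξ (0, i + 1) ⊗ₜ[k] w k ξ (1, i) +
    w k ξ (1, i) ⊗ₜ[k] w k ξ (3, i) := by
  rw [w0, w1, w3, pa_def, pa_def]
  rw [ΔB Δ hΔa hΔb i.val, pa_val_succ, pa_def]

include hΔa hΔc in
lemma Δw2 (i : ZMod 6) : Δ (w k ξ (2, i)) = w k ξ (2, i) ⊗ₜ[k] w k ξ (0, i + 1) +
    w k ξ (3, i) ⊗ₜ[k] w k ξ (2, i) := by
  rw [w0, w2, w3, pa_def, pa_def]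
  rw [ΔC Δ hΔa hΔc i.val, pa_val_succ, pa_def]

include hΔa hΔd in
lemma Δw3 (i : ZMod 6) : Δ (w k ξ (3, i)) = w k ξ (3, i) ⊗ₜ[k] w k ξ (3, i) +
    Tz ξ i • (w k ξ (2, i) ⊗ₜ[k] w k ξ (1, i)) := by
  rw [w1, w2, w3, pa_def]
  rw [ΔD Δ hΔa hΔd i.val, Tz]

end Delta2

variable (k) in
/-- Kronecker delta -/
def dd (u q : I) : k := if u = q then 1 else 0

variable (ξ) in
/-- the coordinates of `Δ (w p)` in the tensor-square basis -/
def cD (p : I) (q : I × I) : k :=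
  if p.1 = 0 then
    dd k (0, p.2) q.1 * dd k (0, p.2) q.2 +
      Sz ξ p.2 * (dd k (1, p.2 - 1) q.1 * dd k (2, p.2 - 1) q.2)
  else if p.1 = 1 then
    dd k (0, p.2 + 1) q.1 * dd k (1, p.2) q.2 + dd k (1, p.2) q.1 * dd k (3, p.2) q.2
  else if p.1 = 2 then
    dd k (2, p.2) q.1 * dd k (0, p.2 + 1) q.2 + dd k (3, p.2) q.1 * dd k (2, p.2) q.2
  else
    dd k (3, p.2) q.1 * dd k (3, p.2) q.2 +
      Tz ξ p.2 * (dd k (2, p.2) q.1 * dd k (1, p.2) q.2)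

section Extract

variable (h6 : ξ ^ 6 = 1)
variable (Δ : HAlg k ξ →ₐ[k] (HAlg k ξ ⊗[k] HAlg k ξ))
variable (hΔa : Δ (Ha k ξ) = Ha k ξ ⊗ₜ[k] Ha k ξ + Hb k ξ ⊗ₜ[k] Hc k ξ)
variable (hΔb : Δ (Hb k ξ) = Ha k ξ ⊗ₜ[k] Hb k ξ + Hb k ξ ⊗ₜ[k] Hd k ξ)
variable (hΔc : Δ (Hc k ξ) = Hc k ξ ⊗ₜ[k] Ha k ξ + Hd k ξ ⊗ₜ[k] Hc k ξ)
variable (hΔd : Δ (Hd k ξ) = Hd k ξ ⊗ₜ[k] Hd k ξ + Hc k ξ ⊗ₜ[k] Hb k ξ)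

lemma repr_w (u q : I) : (bas k ξ h6).repr (w k ξ u) q = dd k u q := by
  rw [show w k ξ u = bas k ξ h6 u from (bas_apply h6 u).symm, Module.Basis.repr_self,
    Finsupp.single_apply, dd]

include hΔa hΔb hΔc hΔd in
lemma repr_Δw (p : I) (q : I × I) :
    ((bas k ξ h6).tensorProduct (bas k ξ h6)).repr (Δ (w k ξ p)) q = cD ξ p q := by
  obtain ⟨t, i⟩ := p
  obtain ⟨q1, q2⟩ := q
  obtain rfl | rfl | rfl | rfl : t = 0 ∨ t = 1 ∨ t = 2 ∨ t = 3 := by revert t; decide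
  · rw [Δw0 Δ hΔa i]
    simp only [map_add, map_smul, Finsupp.add_apply, Finsupp.smul_apply, smul_eq_mul,
      Module.Basis.tensorProduct_repr_tmul_apply, repr_w h6]
    rw [cD]
    norm_num [show ¬((1:Fin 4) = 0) from by decide, show ¬((2:Fin 4) = 0) from by decide,
      show ¬((2:Fin 4) = 1) from by decide, show ¬((3:Fin 4) = 0) from by decide,
      show ¬((3:Fin 4) = 1) from by decide, show ¬((3:Fin 4) = 2) from by decide]
    ring
  · rw [Δw1 Δ hΔa hΔb i]
    simp only [map_add, map_smul, Finsupp.add_apply, Finsupp.smul_apply, smul_eq_mul,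
      Module.Basis.tensorProduct_repr_tmul_apply, repr_w h6]
    rw [cD]
    norm_num [show ¬((1:Fin 4) = 0) from by decide, show ¬((2:Fin 4) = 0) from by decide,
      show ¬((2:Fin 4) = 1) from by decide, show ¬((3:Fin 4) = 0) from by decide,
      show ¬((3:Fin 4) = 1) from by decide, show ¬((3:Fin 4) = 2) from by decide]
    ring
  · rw [Δw2 Δ hΔa hΔc i]
    simp only [map_add, map_smul, Finsupp.add_apply, Finsupp.smul_apply, smul_eq_mul,
      Module.Basis.tensorProduct_repr_tmul_apply, repr_w h6]
    rw [cD]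
    norm_num [show ¬((1:Fin 4) = 0) from by decide, show ¬((2:Fin 4) = 0) from by decide,
      show ¬((2:Fin 4) = 1) from by decide, show ¬((3:Fin 4) = 0) from by decide,
      show ¬((3:Fin 4) = 1) from by decide, show ¬((3:Fin 4) = 2) from by decide]
    ring
  · rw [Δw3 Δ hΔa hΔd i]
    simp only [map_add, map_smul, Finsupp.add_apply, Finsupp.smul_apply, smul_eq_mul,
      Module.Basis.tensorProduct_repr_tmul_apply, repr_w h6]
    rw [cD]
    norm_num [show ¬((1:Fin 4) = 0) from by decide, show ¬((2:Fin 4) = 0) from by decide,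
      show ¬((2:Fin 4) = 1) from by decide, show ¬((3:Fin 4) = 0) from by decide,
      show ¬((3:Fin 4) = 1) from by decide, show ¬((3:Fin 4) = 2) from by decide]
    ring

include hΔa hΔb hΔc hΔd in
lemma master (x : HAlg k ξ) (r0 : I)
    (hx : Δ x = x ⊗ₜ[k] (1 : HAlg k ξ) + (w k ξ r0) ⊗ₜ[k] x) (q : I × I) :
    ∑ p : I, (bas k ξ h6).repr x p * cD ξ p q =
      (bas k ξ h6).repr x q.1 * dd k (0, 0) q.2 + dd k r0 q.1 * (bas k ξ h6).repr x q.2 := by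
  have hsum : x = ∑ p : I, (bas k ξ h6).repr x p • w k ξ p := by
    conv_lhs => rw [← Module.Basis.sum_repr (bas k ξ h6) x]
    exact Finset.sum_congr rfl fun p _ => by rw [bas_apply]
  have hL : Δ x = ∑ p : I, (bas k ξ h6).repr x p • Δ (w k ξ p) := by
    conv_lhs => rw [hsum]
    rw [map_sum]
    exact Finset.sum_congr rfl fun p _ => by rw [map_smul]
  have := congrArg (fun z => (((bas k ξ h6).tensorProduct (bas k ξ h6)).repr z) q) hx
  rw [hL] at this
  rw [map_sum] at this
  rw [Finsupp.finset_sum_apply] at this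
  have hLHS : ∑ p : I, ((((bas k ξ h6).tensorProduct (bas k ξ h6)).repr
      ((bas k ξ h6).repr x p • Δ (w k ξ p))) q) = ∑ p : I, (bas k ξ h6).repr x p * cD ξ p q := by
    refine Finset.sum_congr rfl fun p _ => ?_
    rw [map_smul, Finsupp.smul_apply, smul_eq_mul, repr_Δw h6 Δ hΔa hΔb hΔc hΔd]
  rw [hLHS] at this
  rw [this]
  have h1 : (1 : HAlg k ξ) = bas k ξ h6 (0, 0) := by rw [bas_apply, ← one_eq_w]
  have hr : w k ξ r0 = bas k ξ h6 r0 := (bas_apply h6 r0).symm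
  rw [map_add, Finsupp.add_apply, h1, hr,
    Module.Basis.tensorProduct_repr_tmul_apply, Module.Basis.tensorProduct_repr_tmul_apply,
    Module.Basis.repr_self, Module.Basis.repr_self, Finsupp.single_apply, Finsupp.single_apply]
  simp only [smul_eq_mul, dd]
  ring

end Extract

lemma sum_z6 (f : ZMod 6 → k) : ∑ i, f i = f 0 + f 1 + f 2 + f 3 + f 4 + f 5 := by
  have h : (Finset.univ : Finset (ZMod 6)) =
      insert 0 (insert 1 (insert 2 (insert 3 (insert 4 {5})))) := by decide
  rw [h, Finset.sum_insert (by decide), Finset.sum_insert (by decide),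
    Finset.sum_insert (by decide), Finset.sum_insert (by decide),
    Finset.sum_insert (by decide), Finset.sum_singleton]
  ring

lemma sum_I (f : I → k) : ∑ p : I, f p =
    f (0,0) + f (0,1) + f (0,2) + f (0,3) + f (0,4) + f (0,5) +
    f (1,0) + f (1,1) + f (1,2) + f (1,3) + f (1,4) + f (1,5) +
    f (2,0) + f (2,1) + f (2,2) + f (2,3) + f (2,4) + f (2,5) +
    f (3,0) + f (3,1) + f (3,2) + f (3,3) + f (3,4) + f (3,5) := by
  rw [Fintype.sum_prod_type, Fin.sum_univ_four, sum_z6, sum_z6, sum_z6, sum_z6]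
  ring

lemma key_of (hξ : IsPrimitiveRoot ξ 6) : 1 + ξ ^ 2 + ξ ^ 4 = 0 := by
  have h6 : ξ ^ 6 = 1 := hξ.pow_eq_one
  have h2 : ξ ^ 2 ≠ 1 := hξ.pow_ne_one_of_pos_of_lt (by norm_num) (by norm_num)
  have hz : (ξ ^ 2 - 1) * (1 + ξ ^ 2 + ξ ^ 4) = 0 := by linear_combination h6
  rcases mul_eq_zero.mp hz with h | h
  · exact absurd (sub_eq_zero.mp h) h2
  · exact h

lemma Sz3 (key : 1 + ξ ^ 2 + ξ ^ 4 = 0) : Sz ξ 3 = 0 := by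
  rw [Sz, show ((3 : ZMod 6)).val = 3 from by decide]
  show 1 + ξ ^ 2 * (1 + ξ ^ 2 * (1 + ξ ^ 2 * 0)) = 0
  linear_combination key

lemma Tz2 (key : 1 + ξ ^ 2 + ξ ^ 4 = 0) : Tz ξ 2 = 0 := by
  rw [Tz, show ((2 : ZMod 6)).val = 2 from by decide]
  show 1 + (1 + ξ ^ 2 * (1 + ξ ^ 2 * 0)) * ξ ^ 2 = 0
  linear_combination key

lemma Tz5 (key : 1 + ξ ^ 2 + ξ ^ 4 = 0) : Tz ξ 5 = 0 := by
  rw [Tz, show ((5 : ZMod 6)).val = 5 from by decide]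
  show 1 + (1 + ξ ^ 2 * (1 + ξ ^ 2 * (1 + ξ ^ 2 * (1 + ξ ^ 2 * (1 + ξ ^ 2 * 0))))) * ξ ^ 2 = 0
  linear_combination (1 + ξ ^ 6) * key

lemma w35 : w k ξ (3, 5) = Hd k ξ * Ha k ξ ^ 5 := by
  rw [w3, pa_def, show ((5 : ZMod 6)).val = 5 from by decide]

lemma w32 : w k ξ (3, 2) = Hd k ξ * Ha k ξ ^ 2 := by
  rw [w3, pa_def, show ((2 : ZMod 6)).val = 2 from by decide]

lemma w03 : w k ξ (0, 3) = Ha k ξ ^ 3 := by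
  rw [w0, pa_def, show ((3 : ZMod 6)).val = 3 from by decide]

lemma w25 : w k ξ (2, 5) = Hc k ξ * Ha k ξ ^ 5 := by
  rw [w2, pa_def, show ((5 : ZMod 6)).val = 5 from by decide]

section GLsec

variable (key : 1 + ξ ^ 2 + ξ ^ 4 = 0)
variable (Δ : HAlg k ξ →ₐ[k] (HAlg k ξ ⊗[k] HAlg k ξ))
variable (hΔa : Δ (Ha k ξ) = Ha k ξ ⊗ₜ[k] Ha k ξ + Hb k ξ ⊗ₜ[k] Hc k ξ)
variable (hΔb : Δ (Hb k ξ) = Ha k ξ ⊗ₜ[k] Hb k ξ + Hb k ξ ⊗ₜ[k] Hd k ξ)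
variable (hΔc : Δ (Hc k ξ) = Hc k ξ ⊗ₜ[k] Ha k ξ + Hd k ξ ⊗ₜ[k] Hc k ξ)
variable (hΔd : Δ (Hd k ξ) = Hd k ξ ⊗ₜ[k] Hd k ξ + Hc k ξ ⊗ₜ[k] Hb k ξ)

include key hΔa hΔd in
lemma gl35 : Δ (w k ξ (3, 5)) = w k ξ (3, 5) ⊗ₜ[k] w k ξ (3, 5) := by
  rw [Δw3 Δ hΔa hΔd 5, Tz5 key, zero_smul, add_zero]

include key hΔa hΔd in
lemma gl32 : Δ (w k ξ (3, 2)) = w k ξ (3, 2) ⊗ₜ[k] w k ξ (3, 2) := by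
  rw [Δw3 Δ hΔa hΔd 2, Tz2 key, zero_smul, add_zero]

include key hΔa in
lemma gl03 : Δ (w k ξ (0, 3)) = w k ξ (0, 3) ⊗ₜ[k] w k ξ (0, 3) := by
  rw [Δw0 Δ hΔa 3, Sz3 key, zero_smul, add_zero]

include hΔa hΔc in
lemma glC : Δ (w k ξ (2, 5)) = w k ξ (2, 5) ⊗ₜ[k] (1 : HAlg k ξ) +
    w k ξ (3, 5) ⊗ₜ[k] w k ξ (2, 5) := by
  rw [Δw2 Δ hΔa hΔc 5, show (5 + 1 : ZMod 6) = 0 from by decide, ← one_eq_w]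

/-- the skew-primitive condition for `1 - g` when `g` is group-like -/
lemma skew_one_sub (g : HAlg k ξ) (hg : Δ g = g ⊗ₜ[k] g) (h1 : Δ 1 = (1 : HAlg k ξ) ⊗ₜ[k] 1) :
    Δ (1 - g) = (1 - g) ⊗ₜ[k] (1 : HAlg k ξ) + g ⊗ₜ[k] (1 - g) := by
  rw [map_sub, h1, hg, TensorProduct.sub_tmul, TensorProduct.tmul_sub]
  abel

end GLsec

lemma dd_same (u : I) : dd k u u = 1 := by rw [dd, if_pos rfl]

lemma dd_of_ne {u q : I} (h : u ≠ q) : dd k u q = 0 := by rw [dd, if_neg h]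

section Forward

variable (h6 : ξ ^ 6 = 1)
variable (Δ : HAlg k ξ →ₐ[k] (HAlg k ξ ⊗[k] HAlg k ξ))
variable (hΔa : Δ (Ha k ξ) = Ha k ξ ⊗ₜ[k] Ha k ξ + Hb k ξ ⊗ₜ[k] Hc k ξ)
variable (hΔb : Δ (Hb k ξ) = Ha k ξ ⊗ₜ[k] Hb k ξ + Hb k ξ ⊗ₜ[k] Hd k ξ)
variable (hΔc : Δ (Hc k ξ) = Hc k ξ ⊗ₜ[k] Ha k ξ + Hd k ξ ⊗ₜ[k] Hc k ξ)
variable (hΔd : Δ (Hd k ξ) = Hd k ξ ⊗ₜ[k] Hd k ξ + Hc k ξ ⊗ₜ[k] Hb k ξ)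

lemma repr_one (p : I) : (bas k ξ h6).repr (1 : HAlg k ξ) p = dd k (0, 0) p := by
  rw [one_eq_w, repr_w]

include hΔa hΔb hΔc hΔd in
lemma master' (x : HAlg k ξ) (r0 : I)
    (hx : Δ x = x ⊗ₜ[k] (1 : HAlg k ξ) + (w k ξ r0) ⊗ₜ[k] x) (q : I × I) :
    (bas k ξ h6).repr x (0,0) * cD ξ (0,0) q + (bas k ξ h6).repr x (0,1) * cD ξ (0,1) q +
    (bas k ξ h6).repr x (0,2) * cD ξ (0,2) q + (bas k ξ h6).repr x (0,3) * cD ξ (0,3) q +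
    (bas k ξ h6).repr x (0,4) * cD ξ (0,4) q + (bas k ξ h6).repr x (0,5) * cD ξ (0,5) q +
    (bas k ξ h6).repr x (1,0) * cD ξ (1,0) q + (bas k ξ h6).repr x (1,1) * cD ξ (1,1) q +
    (bas k ξ h6).repr x (1,2) * cD ξ (1,2) q + (bas k ξ h6).repr x (1,3) * cD ξ (1,3) q +
    (bas k ξ h6).repr x (1,4) * cD ξ (1,4) q + (bas k ξ h6).repr x (1,5) * cD ξ (1,5) q +
    (bas k ξ h6).repr x (2,0) * cD ξ (2,0) q + (bas k ξ h6).repr x (2,1) * cD ξ (2,1) q +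
    (bas k ξ h6).repr x (2,2) * cD ξ (2,2) q + (bas k ξ h6).repr x (2,3) * cD ξ (2,3) q +
    (bas k ξ h6).repr x (2,4) * cD ξ (2,4) q + (bas k ξ h6).repr x (2,5) * cD ξ (2,5) q +
    (bas k ξ h6).repr x (3,0) * cD ξ (3,0) q + (bas k ξ h6).repr x (3,1) * cD ξ (3,1) q +
    (bas k ξ h6).repr x (3,2) * cD ξ (3,2) q + (bas k ξ h6).repr x (3,3) * cD ξ (3,3) q +
    (bas k ξ h6).repr x (3,4) * cD ξ (3,4) q + (bas k ξ h6).repr x (3,5) * cD ξ (3,5) q =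
      (bas k ξ h6).repr x q.1 * dd k (0, 0) q.2 + dd k r0 q.1 * (bas k ξ h6).repr x q.2 := by
  have h := master h6 Δ hΔa hΔb hΔc hΔd x r0 hx q
  rwa [sum_I (fun p : I => (bas k ξ h6).repr x p * cD ξ p q)] at h

set_option maxHeartbeats 4000000 in
include hΔa hΔb hΔc hΔd in
lemma forward (r0 : I)
    (h0 : dd k r0 ((0 : Fin 4), (0 : ZMod 6)) = 0)
    (h1 : ∀ j : ZMod 6, dd k r0 (1, j) = 0)
    (h2 : ∀ j : ZMod 6, dd k r0 (2, j) = 0)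
    (x : HAlg k ξ) (hx : Δ x = x ⊗ₜ[k] (1 : HAlg k ξ) + (w k ξ r0) ⊗ₜ[k] x) :
    x = ((bas k ξ h6).repr x (0,0)) • (1 - w k ξ r0)
      + (dd k r0 (3,5) * (bas k ξ h6).repr x (2,5)) • w k ξ (2,5) := by
  have E := master' h6 Δ hΔa hΔb hΔc hΔd x r0 hx
  have EA1 := E ((0,1),(0,0))
  have EA2 := E ((0,2),(0,0))
  have EA3 := E ((0,3),(0,0))
  have EA4 := E ((0,4),(0,0))
  have EA5 := E ((0,5),(0,0))
  have EB0 := E ((1,0),(3,0))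
  have EB1 := E ((1,1),(3,1))
  have EB2 := E ((1,2),(3,2))
  have EB3 := E ((1,3),(3,3))
  have EB4 := E ((1,4),(3,4))
  have EB5 := E ((1,5),(3,5))
  have EC0 := E ((2,0),(0,1))
  have EC1 := E ((2,1),(0,2))
  have EC2 := E ((2,2),(0,3))
  have EC3 := E ((2,3),(0,4))
  have EC4 := E ((2,4),(0,5))
  have EC5 := E ((3,5),(2,5))
  have ED0 := E ((3,0),(0,0))
  have ED1 := E ((3,1),(0,0))
  have ED2 := E ((3,2),(0,0))
  have ED3 := E ((3,3),(0,0))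
  have ED4 := E ((3,4),(0,0))
  have ED5 := E ((3,5),(0,0))
  simp (config := { decide := true }) only [cD, dd_same, dd_of_ne, h0, h1, h2,
    show (0 - 1 : ZMod 6) = 5 from by decide, show (1 - 1 : ZMod 6) = 0 from by decide,
    show (2 - 1 : ZMod 6) = 1 from by decide, show (3 - 1 : ZMod 6) = 2 from by decide,
    show (4 - 1 : ZMod 6) = 3 from by decide, show (5 - 1 : ZMod 6) = 4 from by decide,
    show (0 + 1 : ZMod 6) = 1 from by decide, show (1 + 1 : ZMod 6) = 2 from by decide,
    show (2 + 1 : ZMod 6) = 3 from by decide, show (3 + 1 : ZMod 6) = 4 from by decide,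
    show (4 + 1 : ZMod 6) = 5 from by decide, show (5 + 1 : ZMod 6) = 0 from by decide,
    mul_zero, mul_one, zero_mul, one_mul, add_zero, zero_add, if_true, if_false]
    at EA1 EA2 EA3 EA4 EA5 EB0 EB1 EB2 EB3 EB4 EB5 EC0 EC1 EC2 EC3 EC4 EC5
      ED0 ED1 ED2 ED3 ED4 ED5
  have hR : ∀ p : I, (bas k ξ h6).repr
      (((bas k ξ h6).repr x (0,0)) • (1 - w k ξ r0)
        + (dd k r0 (3,5) * (bas k ξ h6).repr x (2,5)) • w k ξ (2,5)) p =
      (bas k ξ h6).repr x (0,0) * (dd k (0,0) p - dd k r0 p)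
        + dd k r0 (3,5) * (bas k ξ h6).repr x (2,5) * dd k (2,5) p := by
    intro p
    rw [map_add, map_smul, map_smul, map_sub, Finsupp.add_apply, Finsupp.smul_apply,
      Finsupp.smul_apply, Finsupp.sub_apply, repr_one h6, repr_w h6, repr_w h6,
      smul_eq_mul, smul_eq_mul]
  refine (bas k ξ h6).ext_elem fun p => ?_
  rw [hR p]
  obtain ⟨t, i⟩ := p
  have hi : ∀ z : ZMod 6, z = 0 ∨ z = 1 ∨ z = 2 ∨ z = 3 ∨ z = 4 ∨ z = 5 := by decide
  obtain rfl | rfl | rfl | rfl : t = 0 ∨ t = 1 ∨ t = 2 ∨ t = 3 := by revert t; decide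
  all_goals obtain rfl | rfl | rfl | rfl | rfl | rfl := hi i
  all_goals simp (config := { decide := true }) only [dd_same, dd_of_ne, h0, h1, h2,
    mul_zero, mul_one, zero_mul, one_mul, add_zero, zero_add, sub_zero, zero_sub, mul_neg,
    neg_zero]
  · linear_combination -EA1
  · linear_combination -EA2
  · linear_combination -EA3
  · linear_combination -EA4
  · linear_combination -EA5
  · linear_combination EB0
  · linear_combination EB1
  · linear_combination EB2
  · linear_combination EB3
  · linear_combination EB4
  · linear_combination EB5
  · linear_combination EC0
  · linear_combination EC1
  · linear_combination EC2
  · linear_combination EC3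
  · linear_combination EC4
  · linear_combination EC5
  · linear_combination -ED0
  · linear_combination -ED1
  · linear_combination -ED2
  · linear_combination -ED3
  · linear_combination -ED4
  · linear_combination -ED5

end Forward
end Sol



theorem stmt_3 (k : Type) [Field k] [IsAlgClosed k] [CharZero k]
    (ξ : k) (hξ : IsPrimitiveRoot ξ 6)
    (Δ : HAlg k ξ →ₐ[k] (HAlg k ξ ⊗[k] HAlg k ξ))
    (hΔa : Δ (Ha k ξ) = Ha k ξ ⊗ₜ[k] Ha k ξ + Hb k ξ ⊗ₜ[k] Hc k ξ)
    (hΔb : Δ (Hb k ξ) = Ha k ξ ⊗ₜ[k] Hb k ξ + Hb k ξ ⊗ₜ[k] Hd k ξ)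
    (hΔc : Δ (Hc k ξ) = Hc k ξ ⊗ₜ[k] Ha k ξ + Hd k ξ ⊗ₜ[k] Hc k ξ)
    (hΔd : Δ (Hd k ξ) = Hd k ξ ⊗ₜ[k] Hd k ξ + Hc k ξ ⊗ₜ[k] Hb k ξ) :
    {x : HAlg k ξ | Δ x = x ⊗ₜ[k] (1 : HAlg k ξ) + (Hd k ξ * Ha k ξ ^ 5) ⊗ₜ[k] x}
        = ↑(Submodule.span k {1 - Hd k ξ * Ha k ξ ^ 5, Hc k ξ * Ha k ξ ^ 5}) ∧
    {x : HAlg k ξ | Δ x = x ⊗ₜ[k] (1 : HAlg k ξ) + (Ha k ξ ^ 3) ⊗ₜ[k] x}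
        = ↑(Submodule.span k {1 - Ha k ξ ^ 3}) ∧
    {x : HAlg k ξ | Δ x = x ⊗ₜ[k] (1 : HAlg k ξ) + (Hd k ξ * Ha k ξ ^ 2) ⊗ₜ[k] x}
        = ↑(Submodule.span k {1 - Hd k ξ * Ha k ξ ^ 2}) := by
  classical
  have h6 : ξ ^ 6 = 1 := hξ.pow_eq_one
  have key : 1 + ξ ^ 2 + ξ ^ 4 = 0 := Sol.key_of hξ
  have hone : Δ (1 : HAlg k ξ) = (1 : HAlg k ξ) ⊗ₜ[k] 1 := by
    rw [map_one]; exact Algebra.TensorProduct.one_def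
  have hg35 : Δ (Hd k ξ * Ha k ξ ^ 5) = (Hd k ξ * Ha k ξ ^ 5) ⊗ₜ[k] (Hd k ξ * Ha k ξ ^ 5) := by
    rw [← Sol.w35]; exact Sol.gl35 key Δ hΔa hΔd
  have hg32 : Δ (Hd k ξ * Ha k ξ ^ 2) = (Hd k ξ * Ha k ξ ^ 2) ⊗ₜ[k] (Hd k ξ * Ha k ξ ^ 2) := by
    rw [← Sol.w32]; exact Sol.gl32 key Δ hΔa hΔd
  have hg03 : Δ (Ha k ξ ^ 3) = (Ha k ξ ^ 3) ⊗ₜ[k] (Ha k ξ ^ 3) := by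
    rw [← Sol.w03]; exact Sol.gl03 key Δ hΔa
  have hgC : Δ (Hc k ξ * Ha k ξ ^ 5) = (Hc k ξ * Ha k ξ ^ 5) ⊗ₜ[k] (1 : HAlg k ξ) +
      (Hd k ξ * Ha k ξ ^ 5) ⊗ₜ[k] (Hc k ξ * Ha k ξ ^ 5) := by
    rw [← Sol.w25, ← Sol.w35]; exact Sol.glC Δ hΔa hΔc
  refine ⟨?_, ?_, ?_⟩
  · ext x
    simp only [Set.mem_setOf_eq, SetLike.mem_coe]
    constructor
    · intro hx
      have hx' : Δ x = x ⊗ₜ[k] (1 : HAlg k ξ) + (Sol.w k ξ (3,5)) ⊗ₜ[k] x := by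
        rwa [Sol.w35]
      have hfin := Sol.forward h6 Δ hΔa hΔb hΔc hΔd (3,5)
        (Sol.dd_of_ne (by decide)) (fun j => Sol.dd_of_ne (by simp))
        (fun j => Sol.dd_of_ne (by simp)) x hx'
      rw [Sol.w35, Sol.w25] at hfin
      rw [Submodule.mem_span_pair]
      exact ⟨_, _, hfin.symm⟩
    · intro hx
      induction hx using Submodule.span_induction with
      | mem u hu =>
        simp only [Set.mem_insert_iff, Set.mem_singleton_iff] at hu
        rcases hu with rfl | rfl
        · exact Sol.skew_one_sub Δ _ hg35 hone
        · exact hgC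
      | zero => simp
      | add u v _ _ hu hv =>
        rw [map_add, hu, hv, TensorProduct.add_tmul, TensorProduct.tmul_add]
        abel
      | smul r u _ hu =>
        rw [map_smul, hu, smul_add, TensorProduct.smul_tmul', TensorProduct.tmul_smul]
  · ext x
    simp only [Set.mem_setOf_eq, SetLike.mem_coe]
    constructor
    · intro hx
      have hx' : Δ x = x ⊗ₜ[k] (1 : HAlg k ξ) + (Sol.w k ξ (0,3)) ⊗ₜ[k] x := by
        rwa [Sol.w03]
      have hfin := Sol.forward h6 Δ hΔa hΔb hΔc hΔd (0,3)
        (Sol.dd_of_ne (by decide)) (fun j => Sol.dd_of_ne (by simp))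
        (fun j => Sol.dd_of_ne (by simp)) x hx'
      rw [Sol.dd_of_ne (by decide), zero_mul, zero_smul, add_zero, Sol.w03] at hfin
      rw [Submodule.mem_span_singleton]
      exact ⟨_, hfin.symm⟩
    · intro hx
      induction hx using Submodule.span_induction with
      | mem u hu =>
        simp only [Set.mem_singleton_iff] at hu
        subst hu
        exact Sol.skew_one_sub Δ _ hg03 hone
      | zero => simp
      | add u v _ _ hu hv =>
        rw [map_add, hu, hv, TensorProduct.add_tmul, TensorProduct.tmul_add]
        abel
      | smul r u _ hu =>
        rw [map_smul, hu, smul_add, TensorProduct.smul_tmul', TensorProduct.tmul_smul]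
  · ext x
    simp only [Set.mem_setOf_eq, SetLike.mem_coe]
    constructor
    · intro hx
      have hx' : Δ x = x ⊗ₜ[k] (1 : HAlg k ξ) + (Sol.w k ξ (3,2)) ⊗ₜ[k] x := by
        rwa [Sol.w32]
      have hfin := Sol.forward h6 Δ hΔa hΔb hΔc hΔd (3,2)
        (Sol.dd_of_ne (by decide)) (fun j => Sol.dd_of_ne (by simp))
        (fun j => Sol.dd_of_ne (by simp)) x hx'
      rw [Sol.dd_of_ne (by decide), zero_mul, zero_smul, add_zero, Sol.w32] at hfin
      rw [Submodule.mem_span_singleton]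
      exact ⟨_, hfin.symm⟩
    · intro hx
      induction hx using Submodule.span_induction with
      | mem u hu =>
        simp only [Set.mem_singleton_iff] at hu
        subst hu
        exact Sol.skew_one_sub Δ _ hg32 hone
      | zero => simp
      | add u v _ _ hu hv =>
        rw [map_add, hu, hv, TensorProduct.add_tmul, TensorProduct.tmul_add]
        abel
      | smul r u _ hu =>
        rw [map_smul, hu, smul_add, TensorProduct.smul_tmul', TensorProduct.tmul_smul]
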